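/- Let p be an odd prime and n a natural number. For each non-negative integer l: if p^{2l} exactly divides n, then A(p^{2l+1}; n) = p^{−l−1} χ_p(−n/p^{2l}); otherwise A(p^{2l+1}; n) = 0. -/

import Mathlib

open Finset

/-- `e z = exp(2 π i z)`. -/
noncomputable def e (z : ℝ) : ℂ := Complex.exp (2 * Real.pi * Complex.I * z)

/-- The quadratic Gauss sum `S(q,a) = ∑_{r=1}^{q} e(a r² / q)`. -/
noncomputable def S (q : ℕ) (a : ℤ) : ℂ :=
  ∑ r ∈ Finset.Icc 1 q, e ((a : ℝ) * (r : ℝ) ^ 2 / (q : ℝ))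

/-- `A(q;n) = ∑_{1 ≤ a ≤ q, gcd(a,q)=1} q⁻³ S(q,a)³ e(-n a / q)`. -/
noncomputable def A (q n : ℕ) : ℂ :=
  ∑ a ∈ (Finset.Icc 1 q).filter (fun a => Nat.gcd a q = 1),
    (q : ℂ) ^ (-(3 : ℤ)) * S q (a : ℤ) ^ 3 * e (-((n : ℝ) * (a : ℝ) / (q : ℝ)))

open AddChar

noncomputable def E (c k : ℤ) : ℂ := e ((c : ℝ) / (k : ℝ))

lemma e_add (x y : ℝ) : e (x + y) = e x * e y := by
  simp [e, mul_add, Complex.exp_add]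

lemma e_int (c : ℤ) : e (c : ℝ) = 1 := by
  rw [e]
  convert Complex.exp_int_mul_two_pi_mul_I c using 2
  push_cast
  ring

lemma E_add (c d k : ℤ) : E (c + d) k = E c k * E d k := by
  rw [E, E, E, ← e_add]
  congr 1
  push_cast
  ring

lemma E_zero (k : ℤ) : E 0 k = 1 := by
  simp [E, e]

lemma E_mul_self (c k : ℤ) : E (c * k) k = 1 := by
  rcases eq_or_ne k 0 with h | h
  · simp [h, E, e]
  · rw [E]
    have : ((c * k : ℤ) : ℝ) / (k : ℝ) = ((c : ℤ) : ℝ) := by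
      field_simp
      push_cast; ring
    rw [this, e_int]

lemma E_congr {c d k : ℤ} (h : k ∣ (c - d)) : E c k = E d k := by
  obtain ⟨t, ht⟩ := h
  have : c = d + t * k := by linarith [ht]
  rw [this, E_add, E_mul_self, mul_one]

lemma E_pow (c k : ℤ) (t : ℕ) : E c k ^ t = E (t * c) k := by
  rw [E, E, e, e, ← Complex.exp_nat_mul]
  congr 1
  push_cast
  ring


lemma E_eq_one_iff {c k : ℤ} (hk : k ≠ 0) : E c k = 1 ↔ k ∣ c := by
  constructor
  · intro h
    rw [E, e, Complex.exp_eq_one_iff] at h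
    obtain ⟨m, hm⟩ := h
    have h2 : (2 * (Real.pi : ℂ) * Complex.I) ≠ 0 := by
      simp [Real.pi_ne_zero, Complex.I_ne_zero, Complex.ofReal_ne_zero]
    have hx : (((c : ℝ) / (k : ℝ) : ℝ) : ℂ) = (m : ℂ) :=
      mul_left_cancel₀ h2 (by rw [hm]; ring)
    have hr : (c : ℝ) / (k : ℝ) = (m : ℝ) := by exact_mod_cast hx
    have hkr : (k : ℝ) ≠ 0 := Int.cast_ne_zero.mpr hk
    have : (c : ℝ) = (m : ℝ) * (k : ℝ) := by
      field_simp at hr; linarith [hr]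
    have : c = m * k := by exact_mod_cast this
    exact ⟨m, by linarith [this]⟩
  · intro h
    obtain ⟨t, ht⟩ := h
    rw [ht, mul_comm, E_mul_self]

lemma E_scale {m : ℤ} (hm : m ≠ 0) (c k : ℤ) : E (m * c) (m * k) = E c k := by
  rw [E, E]
  congr 1
  have hmr : (m : ℝ) ≠ 0 := Int.cast_ne_zero.mpr hm
  push_cast
  rcases eq_or_ne k 0 with h | h
  · simp [h]
  · field_simp


lemma E_geom (k : ℕ) (hk : 0 < k) (c : ℤ) :
    ∑ z ∈ range k, E (c * z) k = if (k : ℤ) ∣ c then (k : ℂ) else 0 := by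
  have hterm : ∀ z : ℕ, E (c * z) k = E c k ^ z := by
    intro z; rw [E_pow]; ring_nf
  by_cases h : (k : ℤ) ∣ c
  · simp only [hterm]
    have h1 : E c k = 1 := (E_eq_one_iff (by exact_mod_cast hk.ne')).mpr h
    simp [h1, if_pos h]
  · rw [if_neg h]
    have h1 : E c k ≠ 1 := fun hh => h ((E_eq_one_iff (by exact_mod_cast hk.ne')).mp hh)
    simp only [hterm]
    rw [geom_sum_eq h1]
    have : E c k ^ k = 1 := by
      rw [E_pow]
      exact (E_eq_one_iff (by exact_mod_cast hk.ne')).mpr ⟨c, by ring⟩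
    rw [this, sub_self, zero_div]

lemma sum_range_mul_decomp (m k : ℕ) (f : ℕ → ℂ) :
    ∑ x ∈ range (m * k), f x = ∑ z ∈ range k, ∑ y ∈ range m, f (y + m * z) := by
  induction k with
  | zero => simp
  | succ k ih =>
    rw [Nat.mul_succ, Finset.sum_range_add, ih, Finset.sum_range_succ]
    congr 1
    exact Finset.sum_congr rfl fun y _ => by rw [add_comm]

lemma sum_Icc_one_eq_sum_range (q : ℕ) (hq : 0 < q) (g : ℕ → ℂ) (h : g q = g 0) :
    ∑ r ∈ Finset.Icc 1 q, g r = ∑ r ∈ range q, g r := by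
  obtain ⟨q', rfl⟩ := Nat.exists_eq_add_of_lt hq
  simp only [zero_add] at h ⊢
  rw [← Finset.Ico_add_one_right_eq_Icc, Finset.sum_Ico_eq_sum_range]
  simp only [Nat.add_sub_cancel]
  rw [Finset.sum_range_succ, Finset.sum_range_succ']
  simp only [add_comm 1]
  rw [h]

lemma S_eq_range (q : ℕ) (hq : 0 < q) (a : ℤ) :
    S q a = ∑ r ∈ range q, E (a * (r : ℤ) ^ 2) q := by
  have hterm : ∀ r : ℕ, e ((a : ℝ) * (r : ℝ) ^ 2 / (q : ℝ)) = E (a * (r : ℤ) ^ 2) q := by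
    intro r
    rw [E]
    congr 1
    push_cast
    ring
  rw [S]
  simp only [hterm]
  apply sum_Icc_one_eq_sum_range q hq
  have h1 : E (a * (q : ℤ) ^ 2) q = 1 := by
    have h : a * (q : ℤ) ^ 2 = (a * q) * q := by ring
    rw [h, E_mul_self]
  have h2 : E (a * ((0:ℕ) : ℤ) ^ 2) q = 1 := by
    norm_num
    exact E_zero q
  rw [h1, h2]



section prime
variable (p : ℕ) [hp : Fact p.Prime]


lemma zeta_pow : E 1 p ^ p = 1 := by
  rw [E_pow, mul_one]
  exact (E_eq_one_iff (by exact_mod_cast hp.out.pos.ne')).mpr dvd_rfl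

lemma zeta_primitive : IsPrimitiveRoot (E 1 p) p := by
  have := Complex.isPrimitiveRoot_exp p hp.out.pos.ne'
  convert this using 2
  rw [E, e]
  push_cast
  ring

noncomputable def psi : AddChar (ZMod p) ℂ := AddChar.zmodChar p (zeta_pow p)

lemma psi_primitive : (psi p).IsPrimitive :=
  AddChar.zmodChar_primitive_of_primitive_root p (zeta_primitive p)

lemma psi_nat (b : ℕ) : psi p ((b : ℕ) : ZMod p) = E b p := by
  rw [psi, AddChar.zmodChar_apply', E_pow, mul_one]


lemma psi_int (c : ℤ) : psi p ((c : ℤ) : ZMod p) = E c p := by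
  have hp0 : (0:ℤ) < p := by exact_mod_cast hp.out.pos
  set b : ℕ := (c % p).toNat with hb
  have hbc : (b : ℤ) = c % p := Int.toNat_of_nonneg (Int.emod_nonneg c hp0.ne')
  have h1 : ((c : ℤ) : ZMod p) = ((b : ℕ) : ZMod p) := by
    have h2 : ((b : ℤ) : ZMod p) = ((c : ℤ) : ZMod p) := by
      rw [ZMod.intCast_eq_intCast_iff]
      show (b : ℤ) % p = c % p
      rw [hbc, Int.emod_emod_of_dvd _ dvd_rfl]
    simpa using h2.symm
  rw [h1, psi_nat]
  apply E_congr
  rw [hbc]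
  have h3 : (p : ℤ) ∣ c - c % p := Int.dvd_self_sub_of_emod_eq rfl
  simpa [neg_sub] using dvd_neg.mpr h3


noncomputable def chi : MulChar (ZMod p) ℂ :=
  (quadraticChar (ZMod p)).ringHomComp (Int.castRingHom ℂ)


lemma hchar2 (hodd : Odd p) : ringChar (ZMod p) ≠ 2 := by
  rw [ZMod.ringChar_zmod_n]
  intro h
  rw [h] at hodd
  exact (by decide : ¬ Odd 2) hodd


lemma chi_ne_one (hodd : Odd p) : chi p ≠ 1 :=
  (MulChar.ringHomComp_ne_one_iff (Int.cast_injective)).mpr (quadraticChar_ne_one (hchar2 p hodd))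

lemma chi_quadratic : (chi p).IsQuadratic :=
  (quadraticChar_isQuadratic (ZMod p)).comp _


lemma sum_range_zmod (f : ZMod p → ℂ) :
    ∑ w ∈ range p, f ((w : ℕ) : ZMod p) = ∑ x : ZMod p, f x := by
  haveI : NeZero p := ⟨hp.out.pos.ne'⟩
  apply Finset.sum_nbij' (i := fun w => ((w : ℕ) : ZMod p)) (j := fun x => x.val)
  · intro a _; exact mem_univ _
  · intro x _; exact mem_range.mpr (ZMod.val_lt x)
  · intro a ha; exact ZMod.val_natCast_of_lt (mem_range.mp ha)
  · intro x _; exact ZMod.natCast_rightInverse x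
  · intro a _; rfl

lemma chi_sq_unit {x : ZMod p} (hx : x ≠ 0) : chi p x * chi p x = 1 := by
  have := quadraticChar_sq_one hx
  have h2 : (quadraticChar (ZMod p) x : ℂ) * (quadraticChar (ZMod p) x : ℂ) = 1 := by
    rw [← Int.cast_mul, ← pow_two, this]; norm_num
  simpa [chi, MulChar.ringHomComp] using h2

lemma quad_sum_zmod (hodd : Odd p) (a : ZMod p) (ha : a ≠ 0) :
    ∑ x : ZMod p, psi p (a * x ^ 2) = chi p a * gaussSum (chi p) (psi p) := by
  classical
  have h1 : ∑ x : ZMod p, psi p (a * x ^ 2)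
      = ∑ t ∈ (univ : Finset (ZMod p)).image (fun x => x ^ 2),
          #{x ∈ (univ : Finset (ZMod p)) | x ^ 2 = t} • psi p (a * t) :=
    Finset.sum_comp (fun t => psi p (a * t)) (fun x => x ^ 2)
  have h2 : ∑ t ∈ (univ : Finset (ZMod p)).image (fun x => x ^ 2),
          #{x ∈ (univ : Finset (ZMod p)) | x ^ 2 = t} • psi p (a * t)
      = ∑ t : ZMod p, #{x ∈ (univ : Finset (ZMod p)) | x ^ 2 = t} • psi p (a * t) := by
    apply Finset.sum_subset (subset_univ _)
    intro t _ ht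
    have : #{x ∈ (univ : Finset (ZMod p)) | x ^ 2 = t} = 0 := by
      rw [Finset.card_eq_zero]
      ext x
      simp only [mem_filter, mem_univ, true_and, Finset.notMem_empty, iff_false]
      intro hx
      exact ht (Finset.mem_image.mpr ⟨x, mem_univ x, hx⟩)
    rw [this, zero_smul]
  have hcard : ∀ t : ZMod p, (#{x ∈ (univ : Finset (ZMod p)) | x ^ 2 = t} : ℂ)
      = (quadraticChar (ZMod p) t : ℂ) + 1 := by
    intro t
    have := quadraticChar_card_sqrts (hchar2 p hodd) t
    rw [Set.toFinset_setOf] at this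
    exact_mod_cast congrArg (Int.cast : ℤ → ℂ) this
  have h3 : ∑ t : ZMod p, #{x ∈ (univ : Finset (ZMod p)) | x ^ 2 = t} • psi p (a * t)
      = ∑ t : ZMod p, chi p t * psi p (a * t) + ∑ t : ZMod p, psi p (a * t) := by
    rw [← Finset.sum_add_distrib]
    apply Finset.sum_congr rfl
    intro t _
    rw [nsmul_eq_mul, hcard t]
    have : chi p t = (quadraticChar (ZMod p) t : ℂ) := rfl
    rw [this]; ring
  have h4 : ∑ t : ZMod p, psi p (a * t) = 0 := by
    have := AddChar.sum_mulShift a (psi_primitive p)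
    simp only [mul_comm] at this ⊢
    rw [this, if_neg ha]; norm_num
  have h5 : ∑ t : ZMod p, chi p t * psi p (a * t) = gaussSum (chi p) (mulShift (psi p) a) := by
    apply Finset.sum_congr rfl
    intro t _
    rw [mulShift_apply]
  have h6 : chi p a * gaussSum (chi p) (mulShift (psi p) a) = gaussSum (chi p) (psi p) := by
    have := gaussSum_mulShift (chi p) (psi p) (Units.mk0 a ha)
    simpa using this
  rw [h1, h2, h3, h4, h5, add_zero]
  calc gaussSum (chi p) (mulShift (psi p) a)
      = (chi p a * chi p a) * gaussSum (chi p) (mulShift (psi p) a) := by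
        rw [chi_sq_unit p ha, one_mul]
    _ = chi p a * gaussSum (chi p) (psi p) := by rw [mul_assoc, h6]

lemma S_prime_pow (hodd : Odd p) (l : ℕ) (a : ℤ) (ha : ¬ (p : ℤ) ∣ a) :
    S (p ^ (2 * l + 1)) a
      = (p : ℂ) ^ l * (chi p ((a : ℤ) : ZMod p) * gaussSum (chi p) (psi p)) := by
  have hpp : Prime (p : ℤ) := Nat.prime_iff_prime_int.mp hp.out
  have hp0 : 0 < p := hp.out.pos
  have hq0 : 0 < p ^ (2 * l + 1) := pow_pos hp0 _
  -- non-divisibility of 2*a by p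
  have hp2 : ¬ (p : ℤ) ∣ 2 := by
    rw [show ((2:ℤ)) = ((2:ℕ):ℤ) by norm_num, Int.natCast_dvd_natCast]
    intro h
    have := (Nat.prime_dvd_prime_iff_eq hp.out Nat.prime_two).mp h
    rw [this] at hodd
    exact (by decide : ¬ Odd 2) hodd
  have h2a : ¬ (p : ℤ) ∣ 2 * a := by
    intro h
    rcases hpp.dvd_mul.mp h with h | h
    · exact hp2 h
    · exact ha h
  have hcop : IsCoprime ((p:ℤ) ^ l) (2 * a) :=
    ((Prime.coprime_iff_not_dvd hpp).mpr h2a).symm.pow_right.symm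
  rw [S_eq_range _ hq0]
  have hsplit : p ^ (2 * l + 1) = p ^ (l + 1) * p ^ l := by ring
  rw [hsplit, sum_range_mul_decomp, Finset.sum_comm]
  have hm1 : ((p ^ (l+1) * p ^ l : ℕ) : ℤ) = (p:ℤ)^(l+1) * (p:ℤ)^l := by push_cast; ring
  have key : ∀ y z : ℕ,
      E (a * ((y + p ^ (l + 1) * z : ℕ) : ℤ) ^ 2) ((p ^ (l+1) * p ^ l : ℕ) : ℤ)
        = E (a * (y : ℤ) ^ 2) ((p ^ (2*l+1) : ℕ) : ℤ)
          * E ((2 * a * (y:ℤ)) * (z:ℤ)) ((p ^ l : ℕ) : ℤ) := by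
    intro y z
    rw [hm1]
    have hc : (a * ((y + p ^ (l + 1) * z : ℕ) : ℤ) ^ 2)
        = a * (y:ℤ)^2 + ((p:ℤ)^(l+1) * ((2 * a * (y:ℤ)) * (z:ℤ))
            + (p:ℤ)^(l+1) * ((p:ℤ)^(l+1) * (a * (z:ℤ)^2))) := by
      push_cast
      ring
    rw [hc, E_add, E_add]
    have h1 : E ((p:ℤ)^(l+1) * ((2*a*(y:ℤ))*(z:ℤ))) ((p:ℤ)^(l+1) * (p:ℤ)^l)
        = E ((2*a*(y:ℤ))*(z:ℤ)) ((p:ℤ)^l) := E_scale (by positivity) _ _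
    have h2 : E ((p:ℤ)^(l+1) * ((p:ℤ)^(l+1) * (a*(z:ℤ)^2))) ((p:ℤ)^(l+1) * (p:ℤ)^l) = 1 := by
      rw [E_scale (by positivity)]
      have h : (p:ℤ)^(l+1) * (a*(z:ℤ)^2) = ((p:ℤ) * (a*(z:ℤ)^2)) * (p:ℤ)^l := by ring
      rw [h, E_mul_self]
    have hmm : (p:ℤ)^(l+1) * (p:ℤ)^l = ((p ^ (2*l+1) : ℕ) : ℤ) := by push_cast; ring
    rw [h1, h2, mul_one, hmm]
    norm_cast
  simp only [key]
  have inner : ∀ y : ℕ,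
      ∑ z ∈ range (p ^ l), E (a * (y : ℤ) ^ 2) ((p ^ (2*l+1) : ℕ) : ℤ)
          * E ((2 * a * (y:ℤ)) * (z:ℤ)) ((p ^ l : ℕ) : ℤ)
        = E (a * (y : ℤ) ^ 2) ((p ^ (2*l+1) : ℕ) : ℤ)
          * (if p ^ l ∣ y then ((p ^ l : ℕ) : ℂ) else 0) := by
    intro y
    rw [← Finset.mul_sum, E_geom _ (pow_pos hp0 l)]
    congr 2
    rw [eq_iff_iff]
    constructor
    · intro h
      have h' : ((p^l : ℕ) : ℤ) ∣ (y : ℤ) := by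
        apply IsCoprime.dvd_of_dvd_mul_left _ (by rwa [mul_assoc] at h)
        rwa [show ((p^l : ℕ) : ℤ) = (p:ℤ)^l by push_cast; ring]
      exact_mod_cast h'
    · intro h
      have h' : ((p^l : ℕ) : ℤ) ∣ (y : ℤ) := by exact_mod_cast h
      exact Dvd.dvd.mul_left h' _
  simp only [inner]
  -- second decomposition of the y-sum
  have hsplit2 : p ^ (l + 1) = p ^ l * p := by ring
  rw [hsplit2, sum_range_mul_decomp]
  have step : ∀ w : ℕ, w ∈ range p →
      ∑ u ∈ range (p ^ l),
        (E (a * ((u + p ^ l * w : ℕ) : ℤ) ^ 2) ((p ^ (2*l+1) : ℕ) : ℤ)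
          * (if p ^ l ∣ (u + p ^ l * w) then ((p ^ l : ℕ) : ℂ) else 0))
      = ((p ^ l : ℕ) : ℂ) * E (a * (w : ℤ) ^ 2) ((p : ℕ) : ℤ) := by
    intro w _
    rw [Finset.sum_eq_single_of_mem 0 (mem_range.mpr (pow_pos hp0 l))]
    · rw [if_pos (by simp)]
      have hcast : E (a * ((0 + p ^ l * w : ℕ) : ℤ) ^ 2) ((p ^ (2*l+1) : ℕ) : ℤ)
          = E (a * (w : ℤ) ^ 2) ((p : ℕ) : ℤ) := by
        have hq2 : ((p ^ (2*l+1) : ℕ) : ℤ) = (p:ℤ)^(2*l) * (p:ℤ) := by push_cast; ring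
        have hc2 : (a * ((0 + p ^ l * w : ℕ) : ℤ) ^ 2) = (p:ℤ)^(2*l) * (a * (w:ℤ)^2) := by
          push_cast
          ring
        rw [hq2, hc2, E_scale (by positivity)]
      rw [hcast]
      ring
    · intro u hu hu0
      rw [if_neg, mul_zero]
      intro hdvd
      have hdu : p ^ l ∣ u := by
        have h2 := Nat.dvd_sub hdvd (Dvd.intro w rfl)
        simpa using h2
      exact absurd (Nat.le_of_dvd (Nat.pos_of_ne_zero hu0) hdu)
        (not_le.mpr (mem_range.mp hu))
  rw [Finset.sum_congr rfl step, ← Finset.mul_sum]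
  have last : ∑ w ∈ range p, E (a * (w:ℤ)^2) ((p:ℕ):ℤ)
      = chi p ((a:ℤ) : ZMod p) * gaussSum (chi p) (psi p) := by
    have hterm : ∀ w : ℕ, E (a * (w:ℤ)^2) ((p:ℕ):ℤ)
        = psi p (((a:ℤ) : ZMod p) * (((w:ℕ) : ZMod p))^2) := by
      intro w
      rw [← psi_int]
      congr 1
      push_cast
      ring
    simp only [hterm]
    rw [sum_range_zmod p (fun x => psi p (((a:ℤ) : ZMod p) * x^2))]
    apply quad_sum_zmod p hodd
    rw [Ne, ZMod.intCast_zmod_eq_zero_iff_dvd]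
    exact ha
  rw [last]
  push_cast
  ring



lemma filter_Icc_eq (q : ℕ) (hq : 1 < q) :
    (Finset.Icc 1 q).filter (fun a => Nat.gcd a q = 1)
      = (range q).filter (fun a => Nat.gcd a q = 1) := by
  ext a
  simp only [mem_filter, Finset.mem_Icc, mem_range]
  constructor
  · rintro ⟨⟨h1, h2⟩, h3⟩
    refine ⟨lt_of_le_of_ne h2 ?_, h3⟩
    rintro rfl
    rw [Nat.gcd_self] at h3
    omega
  · rintro ⟨h1, h3⟩
    refine ⟨⟨?_, h1.le⟩, h3⟩
    rcases Nat.eq_zero_or_pos a with rfl | h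
    · rw [Nat.gcd_zero_left] at h3; omega
    · exact h

lemma coprime_iff_not_dvd' (l : ℕ) (a : ℕ) :
    Nat.gcd a (p ^ (2 * l + 1)) = 1 ↔ ¬ p ∣ a := by
  show Nat.Coprime a (p ^ (2 * l + 1)) ↔ ¬ p ∣ a
  rw [Nat.coprime_pow_right_iff (by omega), Nat.coprime_comm]
  exact Nat.Prime.coprime_iff_not_dvd hp.out

lemma A_as_sum (hodd : Odd p) (n l : ℕ) :
    A (p ^ (2 * l + 1)) n
      = ((p ^ (2 * l + 1) : ℕ) : ℂ) ^ (-(3:ℤ)) * (p : ℂ) ^ (3 * l)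
          * (gaussSum (chi p) (psi p)) ^ 3
          * ∑ a ∈ range (p ^ (2 * l + 1)),
              chi p ((a : ℕ) : ZMod p) * E (-((n : ℤ) * (a : ℕ))) ((p ^ (2 * l + 1) : ℕ) : ℤ) := by
  have hp1 : 1 < p := hp.out.one_lt
  have hq1 : 1 < p ^ (2 * l + 1) := Nat.one_lt_pow (by omega) hp1
  rw [A, filter_Icc_eq _ hq1, Finset.sum_filter, Finset.mul_sum]
  apply Finset.sum_congr rfl
  intro a _
  by_cases hpa : p ∣ a
  · rw [if_neg (by rw [coprime_iff_not_dvd']; exact fun h => h hpa)]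
    have h0 : ((a : ℕ) : ZMod p) = 0 := (ZMod.natCast_eq_zero_iff a p).mpr hpa
    rw [h0, MulChar.map_nonunit _ (by simpa using not_isUnit_zero)]
    ring
  · rw [if_pos ((coprime_iff_not_dvd' p l a).mpr hpa)]
    have ha' : ¬ (p : ℤ) ∣ (a : ℤ) := by exact_mod_cast hpa
    rw [S_prime_pow p hodd l _ ha']
    have hchi : ((a : ℤ) : ZMod p) = ((a : ℕ) : ZMod p) := by push_cast; ring
    have he : e (-((n : ℝ) * (a : ℝ) / ((p ^ (2*l+1) : ℕ) : ℝ)))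
        = E (-((n : ℤ) * (a : ℕ))) ((p ^ (2 * l + 1) : ℕ) : ℤ) := by
      rw [E]
      congr 1
      push_cast
      ring
    rw [he, hchi]
    have hcu : chi p ((a : ℕ) : ZMod p) * chi p ((a : ℕ) : ZMod p) = 1 := by
      apply chi_sq_unit
      rw [Ne, ZMod.natCast_eq_zero_iff]
      exact hpa
    have hc3 : chi p ((a : ℕ) : ZMod p) ^ 3 = chi p ((a : ℕ) : ZMod p) := by
      have h3 : chi p ((a:ℕ) : ZMod p) ^ 3
          = chi p ((a:ℕ):ZMod p) * (chi p ((a:ℕ):ZMod p) * chi p ((a:ℕ):ZMod p)) := by ring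
      rw [h3, hcu, mul_one]
    field_simp
    ring_nf
    rw [hc3]

lemma T_eval (n l : ℕ) :
    ∑ a ∈ range (p * p ^ (2 * l)),
        chi p ((a : ℕ) : ZMod p) * E (-((n : ℤ) * (a : ℕ))) ((p * p ^ (2 * l) : ℕ) : ℤ)
      = if p ^ (2 * l) ∣ n
        then ((p ^ (2 * l) : ℕ) : ℂ) *
          ∑ b ∈ range p, chi p ((b : ℕ) : ZMod p) * E (-((n : ℤ) * (b : ℕ))) ((p * p ^ (2 * l) : ℕ) : ℤ)
        else 0 := by
  have hp0 : 0 < p := hp.out.pos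
  rw [sum_range_mul_decomp]
  have key : ∀ t : ℕ, ∀ b : ℕ,
      chi p (((b + p * t : ℕ)) : ZMod p) * E (-((n : ℤ) * ((b + p * t : ℕ) : ℕ))) ((p * p ^ (2 * l) : ℕ) : ℤ)
      = (chi p ((b : ℕ) : ZMod p) * E (-((n : ℤ) * (b : ℕ))) ((p * p ^ (2 * l) : ℕ) : ℤ))
        * E ((-(n:ℤ)) * (t : ℕ)) ((p ^ (2 * l) : ℕ) : ℤ) := by
    intro t b
    have h1 : (((b + p * t : ℕ)) : ZMod p) = ((b : ℕ) : ZMod p) := by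
      push_cast [ZMod.natCast_self]
      ring
    have hc : (-((n : ℤ) * ((b + p * t : ℕ) : ℕ)) : ℤ)
        = -((n:ℤ) * (b:ℕ)) + (p : ℤ) * ((-(n:ℤ)) * (t:ℕ)) := by push_cast; ring
    have hmod : ((p * p ^ (2 * l) : ℕ) : ℤ) = (p : ℤ) * ((p ^ (2 * l) : ℕ) : ℤ) := by push_cast; ring
    rw [h1, hc, E_add, hmod, E_scale (by exact_mod_cast hp0.ne')]
    ring
  simp only [key]
  have hfact : ∀ t : ℕ,
      ∑ b ∈ range p, (chi p ((b : ℕ) : ZMod p) * E (-((n : ℤ) * (b : ℕ))) ((p * p ^ (2 * l) : ℕ) : ℤ))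
        * E ((-(n:ℤ)) * (t : ℕ)) ((p ^ (2 * l) : ℕ) : ℤ)
      = (∑ b ∈ range p, chi p ((b : ℕ) : ZMod p) * E (-((n : ℤ) * (b : ℕ))) ((p * p ^ (2 * l) : ℕ) : ℤ))
        * E ((-(n:ℤ)) * (t : ℕ)) ((p ^ (2 * l) : ℕ) : ℤ) := by
    intro t
    rw [Finset.sum_mul]
  simp only [hfact]
  rw [← Finset.mul_sum, E_geom _ (pow_pos hp0 _)]
  have hcond : ((p ^ (2*l) : ℕ) : ℤ) ∣ -(n:ℤ) ↔ p ^ (2 * l) ∣ n := by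
    rw [dvd_neg, Int.natCast_dvd_natCast]
  by_cases hd : p ^ (2 * l) ∣ n
  · rw [if_pos (hcond.mpr hd), if_pos hd]
    ring
  · rw [if_neg (fun h => hd (hcond.mp h)), if_neg hd]
    ring

lemma B_eval (n l m : ℕ) (hm : n = p ^ (2 * l) * m) :
    ∑ b ∈ range p, chi p ((b : ℕ) : ZMod p) * E (-((n : ℤ) * (b : ℕ))) ((p * p ^ (2 * l) : ℕ) : ℤ)
      = gaussSum (chi p) (mulShift (psi p) ((-(m : ℤ) : ℤ) : ZMod p)) := by
  have hp0 : 0 < p := hp.out.pos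
  have key : ∀ b : ℕ, E (-((n : ℤ) * (b : ℕ))) ((p * p ^ (2 * l) : ℕ) : ℤ)
      = psi p (((-(m : ℤ) : ℤ) : ZMod p) * ((b : ℕ) : ZMod p)) := by
    intro b
    have hc : (-((n : ℤ) * (b : ℕ)) : ℤ) = ((p^(2*l) : ℕ) : ℤ) * (-((m:ℤ) * (b:ℕ))) := by
      rw [hm]; push_cast; ring
    have hmod : ((p * p ^ (2 * l) : ℕ) : ℤ) = ((p^(2*l) : ℕ) : ℤ) * ((p:ℕ) : ℤ) := by
      push_cast; ring
    rw [hc, hmod, E_scale (by positivity), ← psi_int]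
    congr 1
    push_cast
    ring
  simp only [key]
  rw [sum_range_zmod p
    (fun x => chi p x * psi p (((-(m : ℤ) : ℤ) : ZMod p) * x))]
  rw [gaussSum]
  apply Finset.sum_congr rfl
  intro x _
  rw [mulShift_apply]

end prime


theorem A_odd_prime_power (p : ℕ) [Fact p.Prime] (hodd : Odd p) (n : ℕ) (l : ℕ) :
    ((p ^ (2 * l) ∣ n ∧ ¬ p ^ (2 * l + 1) ∣ n) →
      A (p ^ (2 * l + 1)) n =
        (p : ℂ) ^ (-(l : ℤ) - 1) * (legendreSym p (-((n / p ^ (2 * l) : ℕ) : ℤ)) : ℂ)) ∧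
    (¬ (p ^ (2 * l) ∣ n ∧ ¬ p ^ (2 * l + 1) ∣ n) → A (p ^ (2 * l + 1)) n = 0) := by
  have hp : Fact p.Prime := inferInstance
  have hp0 : 0 < p := hp.out.pos
  have hpc : (p : ℂ) ≠ 0 := Nat.cast_ne_zero.mpr hp0.ne'
  have hsplit : p ^ (2 * l + 1) = p * p ^ (2 * l) := by ring
  have hAT : A (p ^ (2 * l + 1)) n
      = ((p ^ (2 * l + 1) : ℕ) : ℂ) ^ (-(3:ℤ)) * (p : ℂ) ^ (3 * l)
          * (gaussSum (chi p) (psi p)) ^ 3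
          * ∑ a ∈ range (p * p ^ (2 * l)),
              chi p ((a : ℕ) : ZMod p) * E (-((n : ℤ) * (a : ℕ))) ((p * p ^ (2 * l) : ℕ) : ℤ) := by
    rw [A_as_sum p hodd n l]
    rw [hsplit]
  constructor
  · rintro ⟨hdvd, hndvd⟩
    set m := n / p ^ (2 * l) with hmdef
    have hm : n = p ^ (2 * l) * m := (Nat.mul_div_cancel' hdvd).symm
    have hpm : ¬ p ∣ m := by
      intro hpm
      apply hndvd
      obtain ⟨k, hk⟩ := hpm
      exact ⟨k, by rw [hm, hk]; ring⟩
    have hc' : ((-(m : ℤ) : ℤ) : ZMod p) ≠ 0 := by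
      rw [Ne, ZMod.intCast_zmod_eq_zero_iff_dvd, dvd_neg, Int.natCast_dvd_natCast]
      exact hpm
    have hgs : gaussSum (chi p) (mulShift (psi p) ((-(m : ℤ) : ℤ) : ZMod p))
        = chi p ((-(m : ℤ) : ℤ) : ZMod p) * gaussSum (chi p) (psi p) := by
      have h6 := gaussSum_mulShift (chi p) (psi p) (Units.mk0 _ hc')
      simp only [Units.val_mk0] at h6
      calc gaussSum (chi p) (mulShift (psi p) ((-(m : ℤ) : ℤ) : ZMod p))
          = (chi p ((-(m : ℤ) : ℤ) : ZMod p) * chi p ((-(m : ℤ) : ℤ) : ZMod p))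
            * gaussSum (chi p) (mulShift (psi p) ((-(m : ℤ) : ℤ) : ZMod p)) := by
            rw [chi_sq_unit p hc', one_mul]
        _ = chi p ((-(m : ℤ) : ℤ) : ZMod p) * gaussSum (chi p) (psi p) := by
            rw [mul_assoc, h6]
    have hg4 : (gaussSum (chi p) (psi p)) ^ 4 = (p : ℂ) ^ 2 := by
      have hsq := gaussSum_sq (chi_ne_one p hodd) (chi_quadratic p) (psi_primitive p)
      have hneg1 : ((-1 : ZMod p)) ≠ 0 := by
        intro h
        have : (1 : ZMod p) = 0 := by linear_combination -h
        have h10 : (1 : ZMod p) ≠ 0 := one_ne_zero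
        exact h10 this
      have hcard : (Fintype.card (ZMod p) : ℂ) = (p : ℂ) := by rw [ZMod.card]
      calc (gaussSum (chi p) (psi p)) ^ 4 = ((gaussSum (chi p) (psi p)) ^ 2) ^ 2 := by ring
        _ = (chi p (-1) * (p : ℂ)) ^ 2 := by rw [hsq, hcard]
        _ = (chi p (-1) * chi p (-1)) * (p:ℂ)^2 := by ring
        _ = (p : ℂ) ^ 2 := by rw [chi_sq_unit p hneg1, one_mul]
    rw [hAT, T_eval, if_pos hdvd, B_eval p n l m hm, hgs]
    have hleg : (legendreSym p (-(m : ℤ)) : ℂ) = chi p ((-(m : ℤ) : ℤ) : ZMod p) := rfl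
    rw [hleg]
    -- now pure scalar arithmetic
    have hscal : ((p ^ (2 * l + 1) : ℕ) : ℂ) ^ (-(3:ℤ)) * (p : ℂ) ^ (3 * l)
        * ((p ^ (2*l) : ℕ) : ℂ) * (gaussSum (chi p) (psi p)) ^ 4 = (p : ℂ) ^ (-(l : ℤ) - 1) := by
      rw [hg4]
      have h1 : ((p ^ (2 * l + 1) : ℕ) : ℂ) = (p : ℂ) ^ (2 * l + 1) := by push_cast; ring
      have h2 : ((p ^ (2 * l) : ℕ) : ℂ) = (p : ℂ) ^ (2 * l) := by push_cast; ring
      rw [h1, h2, ← zpow_natCast (p:ℂ) (3 * l), ← zpow_natCast (p:ℂ) (2 * l),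
        ← zpow_natCast (p:ℂ) 2, ← zpow_natCast (p:ℂ) (2 * l + 1), ← zpow_mul,
        ← zpow_add₀ hpc, ← zpow_add₀ hpc, ← zpow_add₀ hpc]
      congr 1
      push_cast
      ring
    calc ((p ^ (2 * l + 1) : ℕ) : ℂ) ^ (-(3:ℤ)) * (p : ℂ) ^ (3 * l)
          * (gaussSum (chi p) (psi p)) ^ 3
          * (((p ^ (2*l) : ℕ) : ℂ) * (chi p ((-(m : ℤ) : ℤ) : ZMod p) * gaussSum (chi p) (psi p)))
        = chi p ((-(m : ℤ) : ℤ) : ZMod p) *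
            (((p ^ (2 * l + 1) : ℕ) : ℂ) ^ (-(3:ℤ)) * (p : ℂ) ^ (3 * l)
            * ((p ^ (2*l) : ℕ) : ℂ) * (gaussSum (chi p) (psi p)) ^ 4) := by ring
      _ = (p : ℂ) ^ (-(l : ℤ) - 1) * chi p ((-(m : ℤ) : ℤ) : ZMod p) := by rw [hscal]; ring
  · intro hcon
    rw [hAT, T_eval]
    by_cases hdvd : p ^ (2 * l) ∣ n
    · have hndvd : p ^ (2 * l + 1) ∣ n := by
        rcases not_and_or.mp hcon with h | h
        · exact absurd hdvd h
        · exact not_not.mp h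
      set m := n / p ^ (2 * l) with hmdef
      have hm : n = p ^ (2 * l) * m := (Nat.mul_div_cancel' hdvd).symm
      have hpm : p ∣ m := by
        obtain ⟨k, hk⟩ := hndvd
        have : p ^ (2 * l) * m = p ^ (2 * l) * (p * k) := by
          rw [← hm, hk]; ring
        have := Nat.eq_of_mul_eq_mul_left (pow_pos hp0 _) this
        exact ⟨k, this⟩
      have hc0 : ((-(m : ℤ) : ℤ) : ZMod p) = 0 := by
        rw [ZMod.intCast_zmod_eq_zero_iff_dvd, dvd_neg, Int.natCast_dvd_natCast]
        exact hpm
      rw [if_pos hdvd, B_eval p n l m hm, hc0]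
      have hzero : gaussSum (chi p) (mulShift (psi p) 0) = 0 := by
        rw [mulShift_zero, gaussSum]
        have : ∀ x : ZMod p, chi p x * (1 : AddChar (ZMod p) ℂ) x = chi p x := by
          intro x
          rw [AddChar.one_apply, mul_one]
        simp only [this]
        exact MulChar.sum_eq_zero_of_ne_one (chi_ne_one p hodd)
      rw [hzero]
      ring
    · rw [if_neg hdvd]
      ring
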